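/- The lifted Simplex code S_{(q,m)}(q|q^ℓ) with 1 ≤ ℓ ≤ m has parameters [(q^m−1)/(q−1), m, q^{m−1}] over GF(q^ℓ), and its dual has parameters [(q^m−1)/(q−1), (q^m−1)/(q−1)−m, 3] over GF(q^ℓ). -/

import Mathlib

open Finset
open scoped Classical

/-- Hamming weight of a vector. -/
noncomputable def wt {ι R : Type*} [Fintype ι] [Zero R] (c : ι → R) : ℕ :=
  Set.ncard {j | c j ≠ 0}

/-- The lifted code `C(q|q^ℓ)`: the `E`-span of (the image in `E^n` of) a code `C ⊆ F^n`. -/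
noncomputable def liftCode (F : Type*) {ι : Type*} (E : Type*) [Field F] [Field E] [Algebra F E]
    (C : Submodule F (ι → F)) : Submodule E (ι → E) :=
  Submodule.span E ((fun c : ι → F => fun j => algebraMap F E (c j)) '' (C : Set (ι → F)))

/-- `A_i(C)`: the number of codewords of Hamming weight `i`. -/
noncomputable def numWt {ι R : Type*} [Fintype ι] [Semiring R] (C : Submodule R (ι → R)) (i : ℕ) : ℕ :=
  Set.ncard {c : ι → R | c ∈ C ∧ wt c = i}

/-- The set of supports of weight-`i` codewords of `C` (without repetition). -/
def codeSupports {ι R : Type*} [Fintype ι] [Semiring R] (C : Submodule R (ι → R)) (i : ℕ) :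
    Set (Set ι) :=
  {s | ∃ c, c ∈ C ∧ wt c = i ∧ s = {j | c j ≠ 0}}

/-- `C` has minimum Hamming distance `d`. -/
def IsMinDist {ι R : Type*} [Fintype ι] [Semiring R] (C : Submodule R (ι → R)) (d : ℕ) : Prop :=
  (∃ c, c ∈ C ∧ c ≠ 0 ∧ wt c = d) ∧ ∀ c, c ∈ C → c ≠ 0 → d ≤ wt c

/-- The dual code under the standard bilinear form. -/
def dualCode {ι R : Type*} [Fintype ι] [CommRing R] (C : Submodule R (ι → R)) :
    Submodule R (ι → R) where
  carrier := {x | ∀ c ∈ C, ∑ j, x j * c j = 0}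
  add_mem' := by
    intro a b ha hb c hc
    simp only [Set.mem_setOf_eq] at *
    simp [Pi.add_apply, add_mul, Finset.sum_add_distrib, ha c hc, hb c hc]
  zero_mem' := by intro c hc; simp
  smul_mem' := by
    intro a x hx c hc
    simp only [Set.mem_setOf_eq] at *
    simp [Pi.smul_apply, smul_eq_mul, mul_assoc, ← Finset.mul_sum, hx c hc]

/-- Evaluation of multivariate polynomials over `GF(2)` as a linear map. -/
noncomputable def evalLM (m : ℕ) :
    MvPolynomial (Fin m) (ZMod 2) →ₗ[ZMod 2] ((Fin m → ZMod 2) → ZMod 2) where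
  toFun := fun p x => MvPolynomial.eval x p
  map_add' := by intro p q; funext x; simp
  map_smul' := by intro a p; funext x; simp

/-- The binary Reed-Muller code `RM₂(r,m)`: evaluations of polynomials of total degree `≤ r`. -/
noncomputable def RM (r m : ℕ) : Submodule (ZMod 2) ((Fin m → ZMod 2) → ZMod 2) :=
  Submodule.map (evalLM m) (MvPolynomial.restrictTotalDegree (Fin m) (ZMod 2) r)


section Aux
open Finset
open scoped Classical
variable {F E : Type*} [Field F] [Field E] [Algebra F E] [Fintype F] {m n : ℕ}

lemma wt_eq_card {ι R : Type*} [Fintype ι] [Zero R] (c : ι → R) :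
    wt c = (univ.filter fun j => c j ≠ 0).card := by
  classical
  rw [wt, ← Set.ncard_coe_finset]
  congr 1
  ext j; simp

/-- The F-linear functional on F^m attached to x : E^m. -/
noncomputable def fLM (x : Fin m → E) : (Fin m → F) →ₗ[F] E where
  toFun v := ∑ i, x i * algebraMap F E (v i)
  map_add' v w := by simp [mul_add, Finset.sum_add_distrib]
  map_smul' a v := by
    simp [Algebra.smul_def, Finset.mul_sum, mul_left_comm]

lemma fLM_apply (x : Fin m → E) (v : Fin m → F) :
    fLM x v = ∑ i, x i * algebraMap F E (v i) := rfl

lemma algebraMap_injective' : Function.Injective (algebraMap F E) :=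
  (algebraMap F E).injective

lemma algebraMap_ne_zero {a : F} (ha : a ≠ 0) : algebraMap F E a ≠ 0 := by
  intro h
  exact ha (algebraMap_injective' (by rw [h, map_zero]))

/-- Counting lemma: columns inside a subspace T vs nonzero points of T. -/
lemma count_lemma (g : Fin n → (Fin m → F)) (hg0 : ∀ i, g i ≠ 0)
    (hg : ∀ v : Fin m → F, v ≠ 0 → ∃! i : Fin n, ∃ a : F, v = a • g i)
    (T : Submodule F (Fin m → F)) :
    (univ.filter fun j => g j ∈ T).card * (Fintype.card F - 1)
      = (univ.filter fun v : Fin m → F => v ∈ T).card - 1 := by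
  classical
  rcases eq_or_ne T ⊥ with rfl | hT
  · have h1 : (univ.filter fun j => g j ∈ (⊥ : Submodule F (Fin m → F))) = ∅ := by
      ext j; simp [Submodule.mem_bot, hg0 j]
    have h2 : (univ.filter fun v : Fin m → F => v ∈ (⊥ : Submodule F (Fin m → F))) = {0} := by
      ext v; simp [Submodule.mem_bot]
    rw [h1, h2]
    simp
  · obtain ⟨v0, hv0T, hv00⟩ := Submodule.exists_mem_ne_zero_of_ne_bot hT
    haveI : Nonempty (Fin n) := ⟨(hg v0 hv00).choose⟩
    set idx : (Fin m → F) → Fin n := fun v =>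
      if h : v = 0 then Classical.arbitrary _ else (hg v h).choose with hidx
    have idx_spec : ∀ v (h : v ≠ 0), ∃ a : F, v = a • g (idx v) := by
      intro v h
      simp only [hidx, dif_neg h]
      exact (hg v h).choose_spec.1
    have idx_unique : ∀ v (h : v ≠ 0) (i : Fin n), (∃ a : F, v = a • g i) → i = idx v := by
      intro v h i hi
      simp only [hidx, dif_neg h]
      exact (hg v h).choose_spec.2 i hi
    have key := Finset.card_eq_sum_card_fiberwise
      (s := univ.filter fun v : Fin m → F => v ∈ T ∧ v ≠ 0)
      (t := univ.filter fun j => g j ∈ T) (f := idx) ?_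
    · have fib : ∀ j ∈ univ.filter fun j => g j ∈ T,
          ((univ.filter fun v : Fin m → F => v ∈ T ∧ v ≠ 0).filter fun v => idx v = j).card
            = Fintype.card F - 1 := by
        intro j hj
        simp only [mem_filter, mem_univ, true_and] at hj
        have himg : ((univ.filter fun v : Fin m → F => v ∈ T ∧ v ≠ 0).filter fun v => idx v = j)
            = (univ.filter fun a : F => a ≠ 0).image (fun a => a • g j) := by
          ext v
          simp only [mem_filter, mem_univ, true_and, mem_image]
          constructor
          · rintro ⟨⟨hvT, hv0⟩, hvj⟩
            obtain ⟨a, ha⟩ := idx_spec v hv0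
            rw [hvj] at ha
            refine ⟨a, ?_, ha.symm⟩
            rintro rfl
            simp at ha
            exact hv0 ha
          · rintro ⟨a, ha0, rfl⟩
            have hv0 : a • g j ≠ 0 := smul_ne_zero ha0 (hg0 j)
            refine ⟨⟨Submodule.smul_mem _ _ hj, hv0⟩, ?_⟩
            exact (idx_unique _ hv0 j ⟨a, rfl⟩).symm
        rw [himg, Finset.card_image_of_injective _ (smul_left_injective F (hg0 j)),
          Finset.filter_ne' univ 0, Finset.card_erase_of_mem (mem_univ 0), Finset.card_univ]
      rw [Finset.sum_congr rfl fib, Finset.sum_const, smul_eq_mul] at key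
      have hsplit : (univ.filter fun v : Fin m → F => v ∈ T ∧ v ≠ 0)
          = (univ.filter fun v : Fin m → F => v ∈ T).erase 0 := by
        ext v
        simp only [mem_filter, mem_univ, true_and, mem_erase]
        tauto
      rw [hsplit, Finset.card_erase_of_mem (by simp [Submodule.zero_mem])] at key
      omega
    · intro v hv
      simp only [Finset.mem_coe, mem_filter, mem_univ, true_and] at hv ⊢
      obtain ⟨a, ha⟩ := idx_spec v hv.2
      have ha0 : a ≠ 0 := by rintro rfl; simp at ha; exact hv.2 ha
      have h2 : g (idx v) = a⁻¹ • v := by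
        conv_rhs => rw [ha]
        rw [smul_smul, inv_mul_cancel₀ ha0, one_smul]
      rw [h2]
      exact Submodule.smul_mem _ _ hv.1

lemma card_filter_mem_submodule (T : Submodule F (Fin m → F)) :
    (univ.filter fun v : Fin m → F => v ∈ T).card
      = Fintype.card F ^ (Module.finrank F T) := by
  classical
  rw [← Fintype.card_subtype]
  exact Module.card_eq_pow_finrank

lemma claim1 (g : Fin n → (Fin m → F)) (hg0 : ∀ i, g i ≠ 0)
    (hg : ∀ v : Fin m → F, v ≠ 0 → ∃! i : Fin n, ∃ a : F, v = a • g i) :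
    n * (Fintype.card F - 1) = Fintype.card F ^ m - 1 := by
  have h := count_lemma g hg0 hg ⊤
  have h1 : (univ.filter fun j : Fin n => g j ∈ (⊤ : Submodule F (Fin m → F))) = univ := by
    simp
  have h2 : (univ.filter fun v : Fin m → F => v ∈ (⊤ : Submodule F (Fin m → F))) = univ := by
    simp
  rw [h1, h2, card_univ, card_univ, Fintype.card_fin, Fintype.card_fun, Fintype.card_fin] at h
  exact h

lemma rows_li (g : Fin n → (Fin m → F))
    (hg : ∀ v : Fin m → F, v ≠ 0 → ∃! i : Fin n, ∃ a : F, v = a • g i) :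
    LinearIndependent E (fun i : Fin m => fun j : Fin n => algebraMap F E (g j i)) := by
  rw [Fintype.linearIndependent_iff]
  intro x hx k
  have hv : (Pi.single k (1:F) : Fin m → F) ≠ 0 := by
    intro h; have := congrFun h k; simp at this
  obtain ⟨i, ⟨a, hai⟩, -⟩ := hg _ hv
  have ha0 : a ≠ 0 := by
    rintro rfl; rw [zero_smul] at hai; exact hv hai
  have hgi : g i = Pi.single k a⁻¹ := by
    have h2 : g i = a⁻¹ • (Pi.single k (1:F) : Fin m → F) := by
      conv_rhs => rw [hai]
      rw [smul_smul, inv_mul_cancel₀ ha0, one_smul]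
    rw [h2]
    funext t
    rcases eq_or_ne t k with rfl | ht
    · simp
    · simp [Pi.single_eq_of_ne ht]
  have hxi := congrFun hx i
  rw [Finset.sum_apply] at hxi
  simp only [Pi.smul_apply, smul_eq_mul, hgi, Pi.zero_apply] at hxi
  rw [Finset.sum_eq_single k (fun t _ ht => by
      rw [Pi.single_eq_of_ne ht, map_zero, mul_zero]) (by simp)] at hxi
  rw [Pi.single_eq_same] at hxi
  rcases mul_eq_zero.mp hxi with h | h
  · exact h
  · exact absurd h (algebraMap_ne_zero (inv_ne_zero ha0))

lemma wt_formula (g : Fin n → (Fin m → F)) (hg0 : ∀ i, g i ≠ 0)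
    (hg : ∀ v : Fin m → F, v ≠ 0 → ∃! i : Fin n, ∃ a : F, v = a • g i)
    (x : Fin m → E) (c : Fin n → E)
    (hc : ∀ j, c j = ∑ i, x i * algebraMap F E (g j i)) :
    wt c * (Fintype.card F - 1)
      = Fintype.card F ^ m
        - Fintype.card F ^ (Module.finrank F (LinearMap.ker (fLM (F := F) x))) := by
  classical
  set K := LinearMap.ker (fLM (F := F) x) with hK
  have hcnt := count_lemma g hg0 hg K
  have hwt : wt c = n - (univ.filter fun j => g j ∈ K).card := by
    rw [wt_eq_card]
    have hset : (univ.filter fun j => ¬ (c j ≠ 0)) = (univ.filter fun j => g j ∈ K) := by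
      ext j
      simp only [mem_filter, mem_univ, true_and, not_not, hK, LinearMap.mem_ker, fLM_apply,
        hc j]
    have := Finset.card_filter_add_card_filter_not
      (s := (univ : Finset (Fin n))) (p := fun j => c j ≠ 0)
    rw [hset] at this
    rw [card_univ, Fintype.card_fin] at this
    omega
  have hcard := card_filter_mem_submodule (F := F) K
  rw [hcard] at hcnt
  have hfk : Module.finrank F K ≤ m := by
    have := Submodule.finrank_le K
    rwa [Module.finrank_pi, Fintype.card_fin] at this
  have hq : 2 ≤ Fintype.card F := Fintype.one_lt_card
  have hpow : Fintype.card F ^ (Module.finrank F K) ≤ Fintype.card F ^ m :=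
    Nat.pow_le_pow_right (by omega) hfk
  have hpow1 : 1 ≤ Fintype.card F ^ (Module.finrank F K) := Nat.one_le_pow _ _ (by omega)
  have h1 := claim1 g hg0 hg
  have htn : (univ.filter fun j => g j ∈ K).card ≤ n := by
    have := Finset.card_filter_le (univ : Finset (Fin n)) (fun j => g j ∈ K)
    rwa [card_univ, Fintype.card_fin] at this
  have hpm : 1 ≤ Fintype.card F ^ m := Nat.one_le_pow _ _ (by omega)
  rw [hwt, Nat.sub_mul]
  omega

lemma wt_lower (g : Fin n → (Fin m → F)) (hg0 : ∀ i, g i ≠ 0)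
    (hg : ∀ v : Fin m → F, v ≠ 0 → ∃! i : Fin n, ∃ a : F, v = a • g i)
    [Finite E] (hm1 : 1 ≤ m) (x : Fin m → E) (c : Fin n → E)
    (hc : ∀ j, c j = ∑ i, x i * algebraMap F E (g j i)) (hc0 : c ≠ 0) :
    Fintype.card F ^ (m - 1) ≤ wt c := by
  have hW := wt_formula g hg0 hg x c hc
  haveI : FiniteDimensional F E := Module.Finite.of_finite
  obtain ⟨j, hj⟩ : ∃ j, c j ≠ 0 := by
    by_contra h; push_neg at h; exact hc0 (funext h)
  have hmem : fLM (F := F) x (g j) = c j := (hc j).symm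
  have hrange : LinearMap.range (fLM (F := F) x) ≠ ⊥ := by
    intro h
    rw [LinearMap.range_eq_bot] at h
    rw [h] at hmem
    exact hj (by rw [← hmem]; rfl)
  have hrk := LinearMap.finrank_range_add_finrank_ker (fLM (F := F) x)
  rw [Module.finrank_pi, Fintype.card_fin] at hrk
  have hrpos : 0 < Module.finrank F (LinearMap.range (fLM (F := F) x)) := by
    rcases Nat.eq_zero_or_pos (Module.finrank F (LinearMap.range (fLM (F := F) x))) with h | h
    · exact absurd (Submodule.finrank_eq_zero.mp h) hrange
    · exact h
  have hker : Module.finrank F (LinearMap.ker (fLM (F := F) x)) ≤ m - 1 := by omega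
  have hq : 2 ≤ Fintype.card F := Fintype.one_lt_card
  have hpow : Fintype.card F ^ (Module.finrank F (LinearMap.ker (fLM (F := F) x)))
      ≤ Fintype.card F ^ (m - 1) := Nat.pow_le_pow_right (by omega) hker
  have hm1' : m - 1 + 1 = m := by omega
  have e : Fintype.card F ^ (m - 1) * (Fintype.card F - 1)
      = Fintype.card F ^ m - Fintype.card F ^ (m - 1) := by
    rw [Nat.mul_sub, mul_one, ← pow_succ, hm1']
  have hple : Fintype.card F ^ (m - 1) ≤ Fintype.card F ^ m :=
    Nat.pow_le_pow_right (by omega) (by omega)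
  have hfin : Fintype.card F ^ (m - 1) * (Fintype.card F - 1) ≤ wt c * (Fintype.card F - 1) := by
    rw [hW, e]; omega
  exact Nat.le_of_mul_le_mul_right hfin (by omega)

lemma row_wt (g : Fin n → (Fin m → F)) (hg0 : ∀ i, g i ≠ 0)
    (hg : ∀ v : Fin m → F, v ≠ 0 → ∃! i : Fin n, ∃ a : F, v = a • g i)
    [Finite E] (hm1 : 1 ≤ m) (k : Fin m) :
    wt (fun j => algebraMap F E (g j k)) = Fintype.card F ^ (m - 1) := by
  classical
  haveI : FiniteDimensional F E := Module.Finite.of_finite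
  have hc : ∀ j, (fun j => algebraMap F E (g j k)) j
      = ∑ i, (Pi.single k (1:E) : Fin m → E) i * algebraMap F E (g j i) := by
    intro j
    rw [Finset.sum_eq_single k (fun t _ ht => by rw [Pi.single_eq_of_ne ht, zero_mul])
      (by simp)]
    rw [Pi.single_eq_same, one_mul]
  have hW := wt_formula g hg0 hg (Pi.single k (1:E)) _ hc
  set f := fLM (F := F) (Pi.single k (1:E) : Fin m → E) with hf
  have hfv : ∀ v : Fin m → F, f v = algebraMap F E (v k) := by
    intro v
    rw [hf, fLM_apply, Finset.sum_eq_single k (fun t _ ht => by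
      rw [Pi.single_eq_of_ne ht, zero_mul]) (by simp)]
    rw [Pi.single_eq_same, one_mul]
  have hrle : LinearMap.range f ≤ Submodule.span F {(1:E)} := by
    rintro y ⟨v, rfl⟩
    rw [hfv, Submodule.mem_span_singleton]
    exact ⟨v k, (Algebra.algebraMap_eq_smul_one (v k)).symm⟩
  have hr1 : Module.finrank F (LinearMap.range f) ≤ 1 := by
    have := Submodule.finrank_mono hrle
    rwa [finrank_span_singleton (one_ne_zero)] at this
  have hrne : LinearMap.range f ≠ ⊥ := by
    intro h
    rw [LinearMap.range_eq_bot] at h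
    have h1 : f (Pi.single k (1:F)) = 0 := by rw [h]; rfl
    rw [hfv, Pi.single_eq_same, map_one] at h1
    exact one_ne_zero h1
  have hrpos : 0 < Module.finrank F (LinearMap.range f) := by
    rcases Nat.eq_zero_or_pos (Module.finrank F (LinearMap.range f)) with h | h
    · exact absurd (Submodule.finrank_eq_zero.mp h) hrne
    · exact h
  have hrk := LinearMap.finrank_range_add_finrank_ker f
  rw [Module.finrank_pi, Fintype.card_fin] at hrk
  have hker : Module.finrank F (LinearMap.ker f) = m - 1 := by omega
  rw [hker] at hW
  have hq : 2 ≤ Fintype.card F := Fintype.one_lt_card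
  have hm1' : m - 1 + 1 = m := by omega
  have e : Fintype.card F ^ (m - 1) * (Fintype.card F - 1)
      = Fintype.card F ^ m - Fintype.card F ^ (m - 1) := by
    rw [Nat.mul_sub, mul_one, ← pow_succ, hm1']
  rw [← e] at hW
  exact Nat.eq_of_mul_eq_mul_right (by omega) hW

lemma mem_dual_iff (g : Fin n → (Fin m → F)) (S : Submodule E (Fin n → E))
    (hS : S = Submodule.span E
      (Set.range fun i : Fin m => fun j : Fin n => algebraMap F E (g j i)))
    (x : Fin n → E) :
    x ∈ dualCode S ↔ ∀ i : Fin m, ∑ j, x j * algebraMap F E (g j i) = 0 := by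
  constructor
  · intro hx i
    exact hx _ (hS ▸ Submodule.subset_span ⟨i, rfl⟩)
  · intro h c hc
    rw [hS] at hc
    induction hc using Submodule.span_induction with
    | mem c hc => obtain ⟨i, rfl⟩ := hc; exact h i
    | zero => simp
    | add a b _ _ ha hb => simp only [Pi.add_apply, mul_add, Finset.sum_add_distrib, ha, hb,
        add_zero]
    | smul t a _ ha =>
        simp only [Pi.smul_apply, smul_eq_mul, mul_left_comm, ← Finset.mul_sum, ha, mul_zero]

lemma map_eq_zero' {a : F} (h : algebraMap F E a = 0) : a = 0 :=
  algebraMap_injective' (by rw [h, map_zero])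

lemma dual_wt_lower (g : Fin n → (Fin m → F)) (hg0 : ∀ i, g i ≠ 0)
    (hg : ∀ v : Fin m → F, v ≠ 0 → ∃! i : Fin n, ∃ a : F, v = a • g i)
    (S : Submodule E (Fin n → E))
    (hS : S = Submodule.span E
      (Set.range fun i : Fin m => fun j : Fin n => algebraMap F E (g j i)))
    (x : Fin n → E) (hx : x ∈ dualCode S) (hx0 : x ≠ 0) : 3 ≤ wt x := by
  classical
  by_contra hlt
  push_neg at hlt
  rw [mem_dual_iff g S hS] at hx
  set s := univ.filter fun j => x j ≠ 0 with hs
  have hxs : ∀ i, ∑ j ∈ s, x j * algebraMap F E (g j i) = 0 := by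
    intro i
    rw [← hx i]
    exact Finset.sum_filter_of_ne (fun j _ h => by
      intro h0; rw [h0, zero_mul] at h; exact h rfl)
  have hcard : s.card = wt x := (wt_eq_card x).symm
  have hne : s.Nonempty := by
    rcases Function.ne_iff.mp hx0 with ⟨j, hj⟩
    refine ⟨j, ?_⟩
    rw [hs, Finset.mem_filter]
    exact ⟨Finset.mem_univ j, by simpa using hj⟩
  have hpos := Finset.card_pos.mpr hne
  have h12 : s.card = 1 ∨ s.card = 2 := by omega
  have hmem : ∀ j ∈ s, x j ≠ 0 := fun j hj => (Finset.mem_filter.mp hj).2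
  rcases h12 with h1 | h2
  · obtain ⟨j, hj⟩ := Finset.card_eq_one.mp h1
    have hxj : x j ≠ 0 := hmem j (hj ▸ Finset.mem_singleton_self j)
    have hz : ∀ i, x j * algebraMap F E (g j i) = 0 := fun i => by
      have := hxs i; rwa [hj, Finset.sum_singleton] at this
    refine hg0 j (funext fun i => ?_)
    rcases mul_eq_zero.mp (hz i) with h | h
    · exact absurd h hxj
    · exact map_eq_zero' h
  · obtain ⟨j, k, hjk, hsjk⟩ := Finset.card_eq_two.mp h2
    have hxj : x j ≠ 0 := hmem j (by rw [hsjk]; simp)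
    have hxk : x k ≠ 0 := hmem k (by rw [hsjk]; simp)
    have hsum : ∀ i, x j * algebraMap F E (g j i) + x k * algebraMap F E (g k i) = 0 :=
      fun i => by have := hxs i; rwa [hsjk, Finset.sum_pair hjk] at this
    obtain ⟨i0, hi0⟩ := Function.ne_iff.mp (hg0 k)
    rw [Pi.zero_apply] at hi0
    have hgk0 : algebraMap F E (g k i0) ≠ 0 := fun h => hi0 (map_eq_zero' h)
    have hgj0 : g j i0 ≠ 0 := by
      intro h
      have h0 := hsum i0
      rw [h, map_zero, mul_zero, zero_add] at h0
      rcases mul_eq_zero.mp h0 with h' | h'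
      · exact hxk h'
      · exact hgk0 h'
    set a := g j i0 * (g k i0)⁻¹ with ha
    have ha0 : a ≠ 0 := mul_ne_zero hgj0 (inv_ne_zero hi0)
    have hamul : a * g k i0 = g j i0 := by
      rw [ha]; field_simp
    have hxk' : x j * algebraMap F E a = - x k := by
      have h0 := hsum i0
      have h1 : (x j * algebraMap F E a + x k) * algebraMap F E (g k i0) = 0 := by
        have : algebraMap F E a * algebraMap F E (g k i0) = algebraMap F E (g j i0) := by
          rw [← map_mul, hamul]
        rw [add_mul, mul_assoc, this]
        exact h0
      rcases mul_eq_zero.mp h1 with h' | h'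
      · linear_combination h'
      · exact absurd h' hgk0
    have hprop : g j = a • g k := by
      funext i
      have h0 := hsum i
      have h1 : x j * algebraMap F E (g j i) = x j * (algebraMap F E a * algebraMap F E (g k i)) := by
        have : x j * algebraMap F E (g j i) = - x k * algebraMap F E (g k i) := by linear_combination h0
        rw [this, ← hxk']
        ring
      have h2 : algebraMap F E (g j i) = algebraMap F E (a * g k i) := by
        rw [map_mul]
        exact mul_left_cancel₀ hxj h1
      have := algebraMap_injective' h2
      rw [this, Pi.smul_apply, smul_eq_mul]
    exact hjk ((hg (g j) (hg0 j)).unique ⟨1, (one_smul F (g j)).symm⟩ ⟨a, hprop⟩)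

lemma dual_exists_wt3 (hm : 2 ≤ m) (g : Fin n → (Fin m → F)) (hg0 : ∀ i, g i ≠ 0)
    (hg : ∀ v : Fin m → F, v ≠ 0 → ∃! i : Fin n, ∃ a : F, v = a • g i)
    (S : Submodule E (Fin n → E))
    (hS : S = Submodule.span E
      (Set.range fun i : Fin m => fun j : Fin n => algebraMap F E (g j i))) :
    ∃ x : Fin n → E, x ∈ dualCode S ∧ x ≠ 0 ∧ wt x = 3 := by
  classical
  have hk01 : (⟨0, by omega⟩ : Fin m) ≠ ⟨1, by omega⟩ := by
    intro h; simpa using congrArg Fin.val h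
  set k0 : Fin m := ⟨0, by omega⟩
  set k1 : Fin m := ⟨1, by omega⟩
  set v1 : Fin m → F := Pi.single k0 (1:F) with hv1def
  set v2 : Fin m → F := Pi.single k1 (1:F) with hv2def
  set v3 : Fin m → F := v1 + v2 with hv3def
  have hv1k0 : v1 k0 = 1 := Pi.single_eq_same k0 1
  have hv1k1 : v1 k1 = 0 := Pi.single_eq_of_ne (Ne.symm hk01) 1
  have hv2k0 : v2 k0 = 0 := Pi.single_eq_of_ne hk01 1
  have hv2k1 : v2 k1 = 1 := Pi.single_eq_same k1 1
  have hv3k0 : v3 k0 = 1 := by rw [hv3def, Pi.add_apply, hv1k0, hv2k0, add_zero]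
  have hv3k1 : v3 k1 = 1 := by rw [hv3def, Pi.add_apply, hv1k1, hv2k1, zero_add]
  have hv10 : v1 ≠ 0 := by
    intro h
    have := congrFun h k0
    rw [hv1k0, Pi.zero_apply] at this
    exact one_ne_zero this
  have hv20 : v2 ≠ 0 := by
    intro h
    have := congrFun h k1
    rw [hv2k1, Pi.zero_apply] at this
    exact one_ne_zero this
  have hv30 : v3 ≠ 0 := by
    intro h
    have := congrFun h k0
    rw [hv3k0, Pi.zero_apply] at this
    exact one_ne_zero this
  obtain ⟨j1, ⟨a1, ha1⟩, -⟩ := hg v1 hv10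
  obtain ⟨j2, ⟨a2, ha2⟩, -⟩ := hg v2 hv20
  obtain ⟨j3, ⟨a3, ha3⟩, -⟩ := hg v3 hv30
  have ha10 : a1 ≠ 0 := by rintro rfl; rw [zero_smul] at ha1; exact hv10 ha1
  have ha20 : a2 ≠ 0 := by rintro rfl; rw [zero_smul] at ha2; exact hv20 ha2
  have ha30 : a3 ≠ 0 := by rintro rfl; rw [zero_smul] at ha3; exact hv30 ha3
  have hcol : ∀ (w w' : Fin m → F) (b b' : F) (jj : Fin n), b ≠ 0 →
      w = b • g jj → w' = b' • g jj → ∃ t : F, w' = t • w := by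
    intro w w' b b' jj hb hw hw'
    have hgj : g jj = b⁻¹ • w := by
      conv_rhs => rw [hw]
      rw [smul_smul, inv_mul_cancel₀ hb, one_smul]
    exact ⟨b' * b⁻¹, by rw [hw', hgj, smul_smul]⟩
  have h12 : j1 ≠ j2 := by
    intro h
    rw [h] at ha1
    obtain ⟨t, ht⟩ := hcol v2 v1 a2 a1 j2 ha20 ha2 ha1
    have := congrFun ht k1
    rw [hv1k1, Pi.smul_apply, hv2k1, smul_eq_mul, mul_one] at this
    have h0 := congrFun ht k0
    rw [hv1k0, Pi.smul_apply, hv2k0, smul_eq_mul, mul_zero] at h0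
    exact one_ne_zero h0
  have h13 : j1 ≠ j3 := by
    intro h
    rw [h] at ha1
    obtain ⟨t, ht⟩ := hcol v3 v1 a3 a1 j3 ha30 ha3 ha1
    have h0 := congrFun ht k1
    rw [hv1k1, Pi.smul_apply, hv3k1, smul_eq_mul, mul_one] at h0
    rw [← h0, zero_smul] at ht
    have h1 := congrFun ht k0
    rw [hv1k0, Pi.zero_apply] at h1
    exact one_ne_zero h1
  have h23 : j2 ≠ j3 := by
    intro h
    rw [h] at ha2
    obtain ⟨t, ht⟩ := hcol v3 v2 a3 a2 j3 ha30 ha3 ha2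
    have h0 := congrFun ht k0
    rw [hv2k0, Pi.smul_apply, hv3k0, smul_eq_mul, mul_one] at h0
    rw [← h0, zero_smul] at ht
    have h1 := congrFun ht k1
    rw [hv2k1, Pi.zero_apply] at h1
    exact one_ne_zero h1
  set x : Fin n → E := Pi.single j1 (algebraMap F E a1) + Pi.single j2 (algebraMap F E a2)
    + Pi.single j3 (-(algebraMap F E a3)) with hxdef
  have hsingle : ∀ (jj : Fin n) (cst : E) (y : Fin n → E),
      ∑ j, (Pi.single jj cst : Fin n → E) j * y j = cst * y jj := by
    intro jj cst y
    rw [Finset.sum_eq_single jj (fun b _ hb => by rw [Pi.single_eq_of_ne hb, zero_mul])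
      (by simp)]
    rw [Pi.single_eq_same]
  have hsum : ∀ y : Fin n → E, ∑ j, x j * y j
      = algebraMap F E a1 * y j1 + algebraMap F E a2 * y j2 - algebraMap F E a3 * y j3 := by
    intro y
    rw [hxdef]
    simp only [Pi.add_apply, add_mul, Finset.sum_add_distrib]
    rw [hsingle, hsingle, hsingle]
    ring
  have hval : ∀ j : Fin n, x j
      = if j = j1 then algebraMap F E a1 else if j = j2 then algebraMap F E a2
        else if j = j3 then -(algebraMap F E a3) else 0 := by
    intro j
    rw [hxdef]
    simp only [Pi.add_apply]
    rcases eq_or_ne j j1 with rfl | hj1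
    · rw [if_pos rfl, Pi.single_eq_same, Pi.single_eq_of_ne h12, Pi.single_eq_of_ne h13]
      ring
    · rw [if_neg hj1, Pi.single_eq_of_ne hj1]
      rcases eq_or_ne j j2 with rfl | hj2
      · rw [if_pos rfl, Pi.single_eq_same, Pi.single_eq_of_ne h23]
        ring
      · rw [if_neg hj2, Pi.single_eq_of_ne hj2]
        rcases eq_or_ne j j3 with rfl | hj3
        · rw [if_pos rfl, Pi.single_eq_same]
          ring
        · rw [if_neg hj3, Pi.single_eq_of_ne hj3]
          ring
  have hcoord : ∀ i, a1 * g j1 i = v1 i ∧ a2 * g j2 i = v2 i ∧ a3 * g j3 i = v3 i := by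
    intro i
    refine ⟨?_, ?_, ?_⟩
    · rw [ha1, Pi.smul_apply, smul_eq_mul]
    · rw [ha2, Pi.smul_apply, smul_eq_mul]
    · rw [ha3, Pi.smul_apply, smul_eq_mul]
  refine ⟨x, ?_, ?_, ?_⟩
  · rw [mem_dual_iff g S hS]
    intro i
    rw [hsum]
    obtain ⟨e1, e2, e3⟩ := hcoord i
    have : algebraMap F E (a1 * g j1 i) + algebraMap F E (a2 * g j2 i)
        - algebraMap F E (a3 * g j3 i) = 0 := by
      rw [e1, e2, e3, ← map_add, ← map_sub]
      rw [hv3def]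
      simp
    rw [map_mul, map_mul, map_mul] at this
    exact this
  · intro h
    have := congrFun h j1
    rw [hval j1, if_pos rfl, Pi.zero_apply] at this
    exact algebraMap_ne_zero ha10 this
  · have hsupp : {j | x j ≠ 0} = {j1, j2, j3} := by
      ext j
      simp only [Set.mem_setOf_eq, Set.mem_insert_iff, Set.mem_singleton_iff]
      rw [hval j]
      rcases eq_or_ne j j1 with rfl | hj1
      · simp [algebraMap_ne_zero ha10]
      · rw [if_neg hj1]
        rcases eq_or_ne j j2 with rfl | hj2
        · simp [hj1, algebraMap_ne_zero ha20]
        · rw [if_neg hj2]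
          rcases eq_or_ne j j3 with rfl | hj3
          · simp [hj1, hj2, neg_ne_zero, algebraMap_ne_zero ha30]
          · simp [hj1, hj2, hj3]
    rw [wt, hsupp]
    exact Set.ncard_eq_three.mpr ⟨j1, j2, j3, h12, h13, h23, rfl⟩

end Aux

set_option maxHeartbeats 1000000 in
/-- the lifted Simplex code has parameters `[(q^m-1)/(q-1), m, q^{m-1}]` over
`GF(q^ℓ)` and its dual has parameters `[(q^m-1)/(q-1), (q^m-1)/(q-1)-m, 3]`. -/
theorem stmt8 {F E : Type*} [Field F] [Field E] [Algebra F E] [Fintype F] [Fintype E]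
    {m n ℓ : ℕ} (hm : 2 ≤ m) (hl1 : 1 ≤ ℓ) (hlm : ℓ ≤ m)
    (hE : Fintype.card E = Fintype.card F ^ ℓ)
    (g : Fin n → (Fin m → F)) (hg0 : ∀ i, g i ≠ 0)
    (hg : ∀ v : Fin m → F, v ≠ 0 → ∃! i : Fin n, ∃ a : F, v = a • g i)
    (S : Submodule E (Fin n → E))
    (hS : S = Submodule.span E
      (Set.range fun i : Fin m => fun j : Fin n => algebraMap F E (g j i))) :
    n * (Fintype.card F - 1) = Fintype.card F ^ m - 1 ∧
    Module.finrank E S = m ∧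
    IsMinDist S (Fintype.card F ^ (m - 1)) ∧
    Module.finrank E (dualCode S) = n - m ∧
    IsMinDist (dualCode S) 3 := by
  classical
  have hrankS : Module.finrank E S = m := by
    have hli := rows_li (E := E) g hg
    have h := finrank_span_eq_card hli
    rw [Fintype.card_fin] at h
    rw [hS]
    exact h
  have hmemS : ∀ c : Fin n → E, c ∈ S →
      ∃ x : Fin m → E, ∀ j, c j = ∑ i, x i * algebraMap F E (g j i) := by
    intro c hc
    rw [hS, Submodule.mem_span_range_iff_exists_fun] at hc
    obtain ⟨x, hx⟩ := hc
    refine ⟨x, fun j => ?_⟩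
    rw [← hx, Finset.sum_apply]
    simp only [Pi.smul_apply, smul_eq_mul]
  refine ⟨claim1 g hg0 hg, hrankS, ⟨?_, ?_⟩, ?_, ?_, ?_⟩
  · -- existence of min weight codeword in S
    set k0 : Fin m := ⟨0, by omega⟩
    refine ⟨fun j => algebraMap F E (g j k0), ?_, ?_, row_wt g hg0 hg (by omega) k0⟩
    · rw [hS]; exact Submodule.subset_span ⟨k0, rfl⟩
    · obtain ⟨j, ⟨a, ha⟩, -⟩ := hg (Pi.single k0 (1:F)) (by
        intro h
        have := congrFun h k0
        rw [Pi.single_eq_same, Pi.zero_apply] at this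
        exact one_ne_zero this)
      have h1 := congrFun ha k0
      rw [Pi.single_eq_same, Pi.smul_apply, smul_eq_mul] at h1
      have hgj : g j k0 ≠ 0 := by
        intro h
        rw [h, mul_zero] at h1
        exact one_ne_zero h1
      intro h
      have := congrFun h j
      rw [Pi.zero_apply] at this
      exact algebraMap_ne_zero hgj this
  · -- lower bound for S
    intro c hc hc0
    obtain ⟨x, hx⟩ := hmemS c hc
    exact wt_lower g hg0 hg (by omega) x c hx hc0
  · -- dual rank
    set M : Matrix (Fin m) (Fin n) E := Matrix.of fun i j => algebraMap F E (g j i) with hM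
    have hdual : dualCode S = LinearMap.ker M.mulVecLin := by
      ext x
      rw [mem_dual_iff g S hS, LinearMap.mem_ker]
      constructor
      · intro h
        funext i
        rw [Matrix.mulVecLin_apply, Pi.zero_apply]
        rw [show M.mulVec x i = ∑ j, x j * algebraMap F E (g j i) from by
          simp [Matrix.mulVec, dotProduct, hM, mul_comm]]
        exact h i
      · intro h i
        have := congrFun h i
        rw [Matrix.mulVecLin_apply, Pi.zero_apply] at this
        rw [show M.mulVec x i = ∑ j, x j * algebraMap F E (g j i) from by
          simp [Matrix.mulVec, dotProduct, hM, mul_comm]] at this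
        exact this
    have hrange : S = LinearMap.range (M.transpose.mulVecLin) := by
      ext c
      rw [hS, Submodule.mem_span_range_iff_exists_fun]
      constructor
      · rintro ⟨y, hy⟩
        refine ⟨y, ?_⟩
        rw [Matrix.mulVecLin_apply, ← hy]
        funext j
        rw [Finset.sum_apply]
        simp [Matrix.mulVec, dotProduct, hM, Matrix.transpose_apply, mul_comm]
      · rintro ⟨y, rfl⟩
        refine ⟨y, ?_⟩
        funext j
        rw [Finset.sum_apply, Matrix.mulVecLin_apply]
        simp [Matrix.mulVec, dotProduct, hM, Matrix.transpose_apply, mul_comm]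
    have h1 := LinearMap.finrank_range_add_finrank_ker M.mulVecLin
    rw [Module.finrank_pi, Fintype.card_fin] at h1
    have h2 : Module.finrank E (LinearMap.range M.mulVecLin)
        = Module.finrank E (LinearMap.range M.transpose.mulVecLin) := (Matrix.rank_transpose M).symm
    rw [← hrange, hrankS] at h2
    rw [hdual]
    omega
  · -- dual existence wt 3
    obtain ⟨x, h1, h2, h3⟩ := dual_exists_wt3 hm g hg0 hg S hS
    exact ⟨x, h1, h2, h3⟩
  · -- dual lower bound
    intro x hx hx0
    exact dual_wt_lower g hg0 hg S hS x hx hx0
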